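/- Let K, L ≥ 1 and let M_α, M_β, d_{αk}, d_{βl} be positive integers. Suppose there are matrices H_{αk} ∈ ℂ^{N_{αk}×M_α}, U_{αk} ∈ ℂ^{N_{αk}×d_{αk}}, V_{αk} ∈ ℂ^{M_α×d_{αk}}, H_{βl} ∈ ℂ^{M_β×N_{βl}}, V_{βl} ∈ ℂ^{N_{βl}×d_{βl}}, U_{βl} ∈ ℂ^{M_β×d_{βl}}, and G_β ∈ ℂ^{M_β×M_α} such that: U_{αk}† H_{αk} V_{αi} = 0 for all i ≠ k; rank(U_{αk}† H_{αk} V_{αk}) = d_{αk} for all k; U_{βl}† H_{βj} V_{βj} = 0 for all j ≠ l; rank(U_{βl}† H_{βl} V_{βl}) = d_{βl} for all l; U_{βl}† G_β V_{αk} = 0 for all k, l; and rank(G_β) = min(M_α, M_β). Then ∑_{k=1}^K d_{αk} + ∑_{l=1}^L d_{βl} ≤ max(M_α, M_β). (Condition (8c) of Theorem 1, deterministic form under a full-rank BS-to-BS channel.) -/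

import Mathlib

open Matrix

lemma aux_isUnit_det {ι : Type*} [Fintype ι] [DecidableEq ι] (M : Matrix ι ι ℂ)
    (h : M.rank = Fintype.card ι) : IsUnit M.det := by
  rw [isUnit_iff_ne_zero]
  intro hdet
  obtain ⟨v, hv, hMv⟩ := (Matrix.exists_mulVec_eq_zero_iff).2 hdet
  have hvker : v ∈ LinearMap.ker M.mulVecLin := by simpa [Matrix.mulVecLin_apply] using hMv
  have hker : 0 < Module.finrank ℂ (LinearMap.ker M.mulVecLin) :=
    Module.finrank_pos_iff_exists_ne_zero.2 ⟨⟨v, hvker⟩, by simpa using hv⟩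
  have hrn := LinearMap.finrank_range_add_finrank_ker M.mulVecLin
  rw [show Module.finrank ℂ (LinearMap.range M.mulVecLin) = M.rank from rfl, h] at hrn
  have : Module.finrank ℂ (ι → ℂ) = Fintype.card ι := Module.finrank_fintype_fun_eq_card ℂ
  omega

lemma aux_rank_blockDiagonal' {K : ℕ} (d : Fin K → ℕ)
    (M : ∀ k, Matrix (Fin (d k)) (Fin (d k)) ℂ) (h : ∀ k, (M k).rank = d k) :
    (blockDiagonal' M).rank = ∑ k, d k := by
  have hu : ∀ k, IsUnit (M k).det := fun k => aux_isUnit_det _ (by simp [h k])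
  have hmul : blockDiagonal' M * blockDiagonal' (fun k => (M k)⁻¹) = 1 := by
    rw [← blockDiagonal'_mul]
    have : (fun k => M k * (M k)⁻¹) = fun k => (1 : Matrix (Fin (d k)) (Fin (d k)) ℂ) := by
      funext k; exact Matrix.mul_nonsing_inv _ (hu k)
    rw [this]; exact blockDiagonal'_one
  have : IsUnit (blockDiagonal' M) := (Matrix.isUnit_iff_isUnit_det _).2 (Matrix.isUnit_det_of_right_inverse hmul)
  rw [Matrix.rank_of_isUnit _ this]
  simp

lemma aux_rank_mul_of_surj {l m n : Type*} [Fintype l] [Fintype m] [Fintype n]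
    (A : Matrix l m ℂ) (B : Matrix m n ℂ) (hB : B.rank = Fintype.card m) :
    (A * B).rank = A.rank := by
  have hrange : LinearMap.range B.mulVecLin = ⊤ := by
    apply Submodule.eq_top_of_finrank_eq
    rw [show Module.finrank ℂ (LinearMap.range B.mulVecLin) = B.rank from rfl, hB,
      Module.finrank_fintype_fun_eq_card]
  rw [Matrix.rank, Matrix.mulVecLin_mul, LinearMap.range_comp_of_range_eq_top _ hrange]
  rfl

lemma aux_rank_mul_of_inj {l m n : Type*} [Fintype l] [Fintype m] [Fintype n]
    (A : Matrix l m ℂ) (B : Matrix m n ℂ) (hA : A.rank = Fintype.card m) :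
    (A * B).rank = B.rank := by
  have hker : LinearMap.ker A.mulVecLin = ⊥ := by
    have hrn := LinearMap.finrank_range_add_finrank_ker A.mulVecLin
    rw [show Module.finrank ℂ (LinearMap.range A.mulVecLin) = A.rank from rfl, hA,
      Module.finrank_fintype_fun_eq_card] at hrn
    have : Module.finrank ℂ (LinearMap.ker A.mulVecLin) = 0 := by omega
    exact Submodule.finrank_eq_zero.mp this
  have hinj : Function.Injective A.mulVecLin := LinearMap.ker_eq_bot.mp hker
  rw [Matrix.rank, Matrix.mulVecLin_mul, LinearMap.range_comp, Matrix.rank]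
  exact (Submodule.equivMapOfInjective _ hinj _).symm.finrank_eq


/-- **Condition (8c) of Theorem 1 (deterministic form).** Under the one-shot linear
interference-alignment conditions of the two-cell MIMO reverse-TDD network and a
full-rank BS-to-BS channel `Gβ`, the total DoF of both cells is at most
`max Mα Mβ`. -/
theorem dof_sum_le_max_M (K L Mα Mβ : ℕ) (hK : 1 ≤ K) (hL : 1 ≤ L)
    (hMα : 1 ≤ Mα) (hMβ : 1 ≤ Mβ)
    (Nα dα : Fin K → ℕ) (Nβ dβ : Fin L → ℕ)
    (hdα : ∀ k, 1 ≤ dα k) (hdβ : ∀ l, 1 ≤ dβ l)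
    (Hα : ∀ k : Fin K, Matrix (Fin (Nα k)) (Fin Mα) ℂ)
    (Uα : ∀ k : Fin K, Matrix (Fin (Nα k)) (Fin (dα k)) ℂ)
    (Vα : ∀ k : Fin K, Matrix (Fin Mα) (Fin (dα k)) ℂ)
    (Hβ : ∀ l : Fin L, Matrix (Fin Mβ) (Fin (Nβ l)) ℂ)
    (Vβ : ∀ l : Fin L, Matrix (Fin (Nβ l)) (Fin (dβ l)) ℂ)
    (Uβ : ∀ l : Fin L, Matrix (Fin Mβ) (Fin (dβ l)) ℂ)
    (Gβ : Matrix (Fin Mβ) (Fin Mα) ℂ)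
    (hZFα : ∀ k i : Fin K, i ≠ k → (Uα k)ᴴ * Hα k * Vα i = 0)
    (hrankα : ∀ k : Fin K, ((Uα k)ᴴ * Hα k * Vα k).rank = dα k)
    (hZFβ : ∀ l j : Fin L, j ≠ l → (Uβ l)ᴴ * Hβ j * Vβ j = 0)
    (hrankβ : ∀ l : Fin L, ((Uβ l)ᴴ * Hβ l * Vβ l).rank = dβ l)
    (hZFcross : ∀ (k : Fin K) (l : Fin L), (Uβ l)ᴴ * Gβ * Vα k = 0)
    (hGβ : Gβ.rank = min Mα Mβ) :
    ∑ k, dα k + ∑ l, dβ l ≤ max Mα Mβ := by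
  classical
  set V : Matrix (Fin Mα) (Σ k : Fin K, Fin (dα k)) ℂ := fun i p => Vα p.1 i p.2 with hVdef
  set A : Matrix (Σ k : Fin K, Fin (dα k)) (Fin Mα) ℂ :=
    fun p i => ((Uα p.1)ᴴ * Hα p.1) p.2 i with hAdef
  set B : Matrix (Σ l : Fin L, Fin (dβ l)) (Fin Mβ) ℂ :=
    fun q i => (Uβ q.1)ᴴ q.2 i with hBdef
  set C : Matrix (Fin Mβ) (Σ l : Fin L, Fin (dβ l)) ℂ :=
    fun i q => (Hβ q.1 * Vβ q.1) i q.2 with hCdef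
  have keyA : ∀ (k : Fin K) (j : Fin (dα k)) (i : Fin K) (j' : Fin (dα i)),
      (A * V) ⟨k, j⟩ ⟨i, j'⟩ = ((Uα k)ᴴ * Hα k * Vα i) j j' := by
    intro k j i j'
    simp only [Matrix.mul_apply]
    simp [Matrix.mul_apply, hAdef, hVdef]
  have hAV : A * V = blockDiagonal' (fun k => (Uα k)ᴴ * Hα k * Vα k) := by
    ext ⟨k, j⟩ ⟨i, j'⟩
    by_cases hki : k = i
    · subst hki
      rw [blockDiagonal'_apply_eq, keyA]
    · rw [blockDiagonal'_apply_ne _ _ _ hki, keyA, hZFα k i (fun h => hki h.symm)]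
      simp
  have hVrank : ∑ k, dα k ≤ V.rank := by
    have := Matrix.rank_mul_le_right A V
    rw [hAV, aux_rank_blockDiagonal' dα _ hrankα] at this
    exact this
  have keyB : ∀ (l : Fin L) (j : Fin (dβ l)) (q : Fin L) (j' : Fin (dβ q)),
      (B * C) ⟨l, j⟩ ⟨q, j'⟩ = ((Uβ l)ᴴ * Hβ q * Vβ q) j j' := by
    intro l j q j'
    simp only [Matrix.mul_apply]
    simp [Matrix.mul_apply, hBdef, hCdef, Finset.mul_sum, Finset.sum_mul, mul_assoc]
    rw [Finset.sum_comm]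
  have hBC : B * C = blockDiagonal' (fun l => (Uβ l)ᴴ * Hβ l * Vβ l) := by
    ext ⟨l, j⟩ ⟨q, j'⟩
    by_cases hlq : l = q
    · subst hlq
      rw [blockDiagonal'_apply_eq, keyB]
    · rw [blockDiagonal'_apply_ne _ _ _ hlq, keyB, hZFβ l q (fun h => hlq h.symm)]
      simp
  have hBrank : ∑ l, dβ l ≤ B.rank := by
    have := Matrix.rank_mul_le_left B C
    rw [hBC, aux_rank_blockDiagonal' dβ _ hrankβ] at this
    exact this
  have hZero : B * Gβ * V = 0 := by
    ext ⟨l, j⟩ ⟨k, j'⟩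
    have key : (B * Gβ * V) ⟨l, j⟩ ⟨k, j'⟩ = ((Uβ l)ᴴ * Gβ * Vα k) j j' := by
      simp only [Matrix.mul_apply]
      simp [Matrix.mul_apply, hBdef, hVdef, Finset.sum_mul]
    rw [key, hZFcross k l]
    simp
  rcases le_total Mα Mβ with h | h
  · have hGr : Gβ.rank = Fintype.card (Fin Mα) := by
      rw [hGβ, min_eq_left h, Fintype.card_fin]
    have h1 : (Gβ * V).rank = V.rank := aux_rank_mul_of_inj Gβ V hGr
    have h2 : B.rank + (Gβ * V).rank ≤ Fintype.card (Fin Mβ) :=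
      Matrix.rank_add_rank_le_card_of_mul_eq_zero (by rw [← Matrix.mul_assoc]; exact hZero)
    rw [Fintype.card_fin, h1] at h2
    have hmax : max Mα Mβ = Mβ := max_eq_right h
    omega
  · have hGr : Gβ.rank = Fintype.card (Fin Mβ) := by
      rw [hGβ, min_eq_right h, Fintype.card_fin]
    have h1 : (B * Gβ).rank = B.rank := aux_rank_mul_of_surj B Gβ hGr
    have h2 : (B * Gβ).rank + V.rank ≤ Fintype.card (Fin Mα) :=
      Matrix.rank_add_rank_le_card_of_mul_eq_zero hZero
    rw [Fintype.card_fin, h1] at h2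
    have hmax : max Mα Mβ = Mα := max_eq_left h
    omega
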